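/- Let C be a triangulated category and T a contravariantly finite rigid full subcategory. Any weak equivalence f : X → Y between objects of T * ΣT is a homotopy equivalence: there exists ε : Y → X such that f∘ε − 1_Y and ε∘f − 1_X both factor through objects of ΣT. -/

import Mathlib

open CategoryTheory CategoryTheory.Limits CategoryTheory.Pretriangulated

variable {C : Type*} [Category C] [Preadditive C] [HasZeroObject C]
  [HasShift C ℤ] [∀ n : ℤ, Functor.Additive (CategoryTheory.shiftFunctor C n)]
  [Pretriangulated C]

/-- `f` factors through an object of the set `S`. -/
def FactorsThruSet (S : Set C) {X Y : C} (f : X ⟶ Y) : Prop :=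
  ∃ U ∈ S, ∃ (a : X ⟶ U) (b : U ⟶ Y), f = a ≫ b

/-- The right perpendicular subcategory `T^⊥` of a full subcategory `T`. -/
def rperp (T : Set C) : Set C := {Z | ∀ T' ∈ T, ∀ (f : T' ⟶ Z), f = 0}

/-- The class `W` of morphisms whose connecting morphisms in any triangle factor
through `T^⊥`. -/
def Wclass (T : Set C) {X Y : C} (f : X ⟶ Y) : Prop :=
  ∀ (Z : C) (r : Z ⟶ X) (s : Y ⟶ Z⟦(1:ℤ)⟧),
    (Triangle.mk r f s ∈ distTriang C) →
      FactorsThruSet (rperp T) r ∧ FactorsThruSet (rperp T) s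

/-- A subcategory `T` is rigid if `C(T, ΣT) = 0`. -/
def IsRigid (T : Set C) : Prop :=
  ∀ T' ∈ T, ∀ T'' ∈ T, ∀ (f : T' ⟶ (T'' : C)⟦(1:ℤ)⟧), f = 0

/-- A subcategory is contravariantly finite if every object admits a right approximation. -/
def ContravariantlyFinite (T : Set C) : Prop :=
  ∀ X : C, ∃ T₀ ∈ T, ∃ (p : T₀ ⟶ X), ∀ T' ∈ T, ∀ (u : T' ⟶ X), ∃ v : T' ⟶ T₀, v ≫ p = u

/-- The subcategory `T * ΣT` of cones of morphisms of `T`. -/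
def TstarSigmaT (T : Set C) : Set C :=
  {A | ∃ T₁ ∈ T, ∃ T₀ ∈ T, ∃ (a : T₁ ⟶ (T₀ : C)) (b : (T₀ : C) ⟶ A)
    (c : A ⟶ (T₁ : C)⟦(1:ℤ)⟧), Triangle.mk a b c ∈ distTriang C}
/-- Any weak equivalence between objects of `T * ΣT` is a homotopy equivalence:
it admits an inverse up to morphisms factoring through `ΣT`. -/
theorem weq_is_homotopy_equivalence (T : Set C)
    (hcf : ContravariantlyFinite T) (hrig : IsRigid T)
    {X Y : C} (hX : X ∈ TstarSigmaT T) (hY : Y ∈ TstarSigmaT T)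
    (f : X ⟶ Y) (hf : Wclass T f) :
    ∃ ε : Y ⟶ X,
      (∃ T' ∈ T, ∃ (a : Y ⟶ ((T' : C)⟦(1:ℤ)⟧)) (b : ((T' : C)⟦(1:ℤ)⟧) ⟶ Y),
        ε ≫ f - 𝟙 Y = a ≫ b) ∧
      (∃ T' ∈ T, ∃ (a : X ⟶ ((T' : C)⟦(1:ℤ)⟧)) (b : ((T' : C)⟦(1:ℤ)⟧) ⟶ X),
        f ≫ ε - 𝟙 X = a ≫ b) := by
  -- Complete f to a triangle Z → X → Y → Z⟦1⟧
  obtain ⟨Z, r, s, hZtri⟩ := distinguished_cocone_triangle₁ f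
  obtain ⟨hr, hs⟩ := hf Z r s hZtri
  obtain ⟨U, hU, p, q, hpq⟩ := hr
  obtain ⟨V, hV, p', q', hp'q'⟩ := hs
  -- Triangles for X and Y
  obtain ⟨S₁, hS₁, S₀, hS₀, a', b', c', hXtri⟩ := hX
  obtain ⟨T₁, hT₁, T₀, hT₀, a, b, c, hYtri⟩ := hY
  -- b ≫ s = 0 since s factors through T^⊥ and T₀ ∈ T
  have hbs : b ≫ s = 0 := by
    rw [hp'q', ← Category.assoc, hV T₀ hT₀ (b ≫ p'), zero_comp]
  -- lift b through f : ∃ g : T₀ ⟶ X, b = g ≫ f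
  obtain ⟨g, hg⟩ := Triangle.coyoneda_exact₃ _ hZtri b hbs
  change T₀ ⟶ X at g
  change b = g ≫ f at hg
  -- a ≫ g = 0
  have hab : a ≫ b = 0 := comp_distTriang_mor_zero₁₂ _ hYtri
  have hagf : (a ≫ g) ≫ f = 0 := by
    rw [Category.assoc, ← hg, hab]
  obtain ⟨w, hw⟩ := Triangle.coyoneda_exact₂ _ hZtri (a ≫ g) hagf
  change T₁ ⟶ Z at w
  change a ≫ g = w ≫ r at hw
  have hag : a ≫ g = 0 := by
    rw [hw, hpq, ← Category.assoc, hU T₁ hT₁ (w ≫ p), zero_comp]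
  -- extend g to ε : Y ⟶ X with g = b ≫ ε
  obtain ⟨ε, hε⟩ := Triangle.yoneda_exact₂ _ hYtri g hag
  change Y ⟶ X at ε
  change g = b ≫ ε at hε
  refine ⟨ε, ?_, ?_⟩
  · -- ε ≫ f - 𝟙 Y factors through T₁⟦1⟧
    have hb0 : b ≫ (ε ≫ f - 𝟙 Y) = 0 := by
      rw [Preadditive.comp_sub, ← Category.assoc, ← hε, ← hg,
        Category.comp_id, sub_self]
    obtain ⟨h, hh⟩ := Triangle.yoneda_exact₃ _ hYtri (ε ≫ f - 𝟙 Y) hb0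
    change T₁⟦(1:ℤ)⟧ ⟶ Y at h
    change ε ≫ f - 𝟙 Y = c ≫ h at hh
    exact ⟨T₁, hT₁, c, h, hh⟩
  · -- f ≫ ε - 𝟙 X factors through S₁⟦1⟧
    have hbfc : (b' ≫ f) ≫ c = 0 := by
      rw [Category.assoc]; exact hrig S₀ hS₀ T₁ hT₁ (b' ≫ f ≫ c)
    obtain ⟨m, hm⟩ := Triangle.coyoneda_exact₃ _ hYtri (b' ≫ f) hbfc
    change S₀ ⟶ T₀ at m
    change b' ≫ f = m ≫ b at hm
    have hmg : (m ≫ g - b') ≫ f = 0 := by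
      rw [Preadditive.sub_comp, Category.assoc, ← hg, ← hm, sub_self]
    obtain ⟨w', hw'⟩ := Triangle.coyoneda_exact₂ _ hZtri (m ≫ g - b') hmg
    change S₀ ⟶ Z at w'
    change m ≫ g - b' = w' ≫ r at hw'
    have hmg0 : m ≫ g - b' = 0 := by
      rw [hw', hpq, ← Category.assoc, hU S₀ hS₀ (w' ≫ p), zero_comp]
    have hb'0 : b' ≫ (f ≫ ε - 𝟙 X) = 0 := by
      have : b' ≫ f ≫ ε = m ≫ g := by
        rw [← Category.assoc, hm, Category.assoc, ← hε]
      rw [Preadditive.comp_sub, this, Category.comp_id, hmg0]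
    obtain ⟨k, hk⟩ := Triangle.yoneda_exact₃ _ hXtri (f ≫ ε - 𝟙 X) hb'0
    change S₁⟦(1:ℤ)⟧ ⟶ X at k
    change f ≫ ε - 𝟙 X = c' ≫ k at hk
    exact ⟨S₁, hS₁, c', k, hk⟩
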